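/- The eigenvalues of the preconditioned matrices A·Q₃⁻¹ and Q₄⁻¹·A are contained in {1, −1}. In particular, A·Q₃⁻¹ equals the block lower-triangular matrix (I, 0, 0; B A⁻¹, I, 0; 0, −C S⁻¹, −I) and Q₄⁻¹ 𝒜 equals the block upper-triangular matrix (I, 0, A⁻¹ Bᵀ S⁻¹ Cᵀ; 0, I, −S⁻¹ Cᵀ; 0, 0, −I). -/

import Mathlib

open Matrix Complex

/-- A 3×3 block matrix with blocks of sizes n, m, l. -/
def blk3 {n m l : ℕ}
    (M11 : Matrix (Fin n) (Fin n) ℝ) (M12 : Matrix (Fin n) (Fin m) ℝ) (M13 : Matrix (Fin n) (Fin l) ℝ)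
    (M21 : Matrix (Fin m) (Fin n) ℝ) (M22 : Matrix (Fin m) (Fin m) ℝ) (M23 : Matrix (Fin m) (Fin l) ℝ)
    (M31 : Matrix (Fin l) (Fin n) ℝ) (M32 : Matrix (Fin l) (Fin m) ℝ) (M33 : Matrix (Fin l) (Fin l) ℝ) :
    Matrix (Fin n ⊕ (Fin m ⊕ Fin l)) (Fin n ⊕ (Fin m ⊕ Fin l)) ℝ :=
  Matrix.fromBlocks M11
    (Matrix.of fun i j => Sum.elim (M12 i) (M13 i) j)
    (Matrix.of fun i j => Sum.elim (fun k => M21 k j) (fun k => M31 k j) i)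
    (Matrix.fromBlocks M22 M23 M32 M33)

section Aux

open Polynomial Module

lemma blk3_eq_fromBlocks {n m l : ℕ} (M11 M12 M13 M21 M22 M23 M31 M32 M33) :
    blk3 (n := n) (m := m) (l := l) M11 M12 M13 M21 M22 M23 M31 M32 M33 =
      Matrix.fromBlocks M11 (fromCols M12 M13) (fromRows M21 M31)
        (Matrix.fromBlocks M22 M23 M32 M33) := by
  unfold blk3 fromCols fromRows
  ext (i | i | i) (j | j | j) <;> rfl

lemma blk3_mul {n m l : ℕ} (A11 A12 A13 A21 A22 A23 A31 A32 A33
    B11 B12 B13 B21 B22 B23 B31 B32 B33) :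
    blk3 (n := n) (m := m) (l := l) A11 A12 A13 A21 A22 A23 A31 A32 A33 *
      blk3 B11 B12 B13 B21 B22 B23 B31 B32 B33 =
    blk3 (A11*B11 + A12*B21 + A13*B31) (A11*B12 + A12*B22 + A13*B32) (A11*B13 + A12*B23 + A13*B33)
         (A21*B11 + A22*B21 + A23*B31) (A21*B12 + A22*B22 + A23*B32) (A21*B13 + A22*B23 + A23*B33)
         (A31*B11 + A32*B21 + A33*B31) (A31*B12 + A32*B22 + A33*B32) (A31*B13 + A32*B23 + A33*B33) := by
  simp only [blk3_eq_fromBlocks, fromBlocks_multiply, fromCols_mul_fromRows,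
    fromRows_mul_fromCols, mul_fromCols, fromCols_mul_fromBlocks,
    fromRows_mul, fromBlocks_mul_fromRows]
  ext (i | i | i) (j | j | j) <;>
    simp [fromBlocks, fromCols, add_assoc]

lemma blk3_one {n m l : ℕ} :
    blk3 (n := n) (m := m) (l := l) 1 0 0 0 1 0 0 0 1 = 1 := by
  rw [blk3_eq_fromBlocks]
  ext (i | i | i) (j | j | j) <;>
    simp [fromBlocks, fromCols, Matrix.one_apply]

lemma blk3_congr {n m l : ℕ} {a11 b11 a12 b12 a13 b13 a21 b21 a22 b22 a23 b23 a31 b31 a32 b32 a33 b33}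
    (h11 : a11 = b11) (h12 : a12 = b12) (h13 : a13 = b13)
    (h21 : a21 = b21) (h22 : a22 = b22) (h23 : a23 = b23)
    (h31 : a31 = b31) (h32 : a32 = b32) (h33 : a33 = b33) :
    blk3 (n := n) (m := m) (l := l) a11 a12 a13 a21 a22 a23 a31 a32 a33 =
      blk3 b11 b12 b13 b21 b22 b23 b31 b32 b33 := by
  subst h11 h12 h13 h21 h22 h23 h31 h32 h33; rfl

lemma aux_transpose_mulVec_eq_zero {m n : ℕ} (B : Matrix (Fin m) (Fin n) ℝ)
    (hB : B.rank = m) {x : Fin m → ℝ} (h : Bᵀ *ᵥ x = 0) : x = 0 := by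
  have hr : Bᵀ.rank = m := by rw [Matrix.rank_transpose]; exact hB
  have hfin : finrank ℝ (LinearMap.range Bᵀ.mulVecLin) = m := hr
  have hk := Bᵀ.mulVecLin.finrank_range_add_finrank_ker
  simp only [hfin, finrank_fintype_fun_eq_card, Fintype.card_fin] at hk
  have hker : LinearMap.ker Bᵀ.mulVecLin = ⊥ := by
    apply Submodule.finrank_eq_zero.mp
    omega
  have hx : x ∈ LinearMap.ker Bᵀ.mulVecLin := by
    rw [LinearMap.mem_ker, Matrix.mulVecLin_apply]
    exact h
  rw [hker, Submodule.mem_bot] at hx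
  exact hx

lemma aux_posdef_conj {m n : ℕ} {M : Matrix (Fin n) (Fin n) ℝ} (hM : M.PosDef)
    (B : Matrix (Fin m) (Fin n) ℝ) (hB : B.rank = m) : (B * M * Bᵀ).PosDef := by
  have hBt : Bᴴ = Bᵀ := by ext i j; simp
  refine Matrix.PosDef.of_dotProduct_mulVec_pos ?_ ?_
  · have := (hM.posSemidef.mul_mul_conjTranspose_same B).1
    rwa [hBt] at this
  · intro x hx
    have hy : Bᵀ *ᵥ x ≠ 0 := fun h => hx (aux_transpose_mulVec_eq_zero B hB h)
    have key : star x ⬝ᵥ (B * M * Bᵀ) *ᵥ x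
        = star (Bᵀ *ᵥ x) ⬝ᵥ M *ᵥ (Bᵀ *ᵥ x) := by
      simp only [star_trivial, ← Matrix.mulVec_mulVec, Matrix.dotProduct_mulVec x B,
        Matrix.mulVec_transpose]
    rw [key]
    exact hM.dotProduct_mulVec_pos hy

lemma aux_eval_charpoly {ι : Type*} [Fintype ι] [DecidableEq ι] (M : Matrix ι ι ℂ) (μ : ℂ) :
    M.charpoly.eval μ = (Matrix.diagonal (fun _ => μ) - M).det := by
  rw [Matrix.charpoly, ← Polynomial.coe_evalRingHom, RingHom.map_det]
  congr 1
  ext i j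
  by_cases h : i = j <;> simp [charmatrix_apply, Matrix.diagonal, h]

lemma aux_spec_root {ι : Type*} [Fintype ι] [DecidableEq ι] (M : Matrix ι ι ℂ) {μ : ℂ}
    (h : μ ∈ spectrum ℂ M) : M.charpoly.eval μ = 0 := by
  rw [spectrum.mem_iff] at h
  rw [aux_eval_charpoly]
  by_contra hd
  apply h
  apply (Matrix.isUnit_iff_isUnit_det _).2
  rw [Matrix.algebraMap_eq_diagonal]
  convert isUnit_iff_ne_zero.2 hd using 2
  all_goals rfl

lemma aux_charpoly_one_eval {k : ℕ} (μ : ℂ) :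
    (Matrix.charpoly (1 : Matrix (Fin k) (Fin k) ℂ)).eval μ = (μ - 1) ^ k := by
  rw [aux_eval_charpoly]
  have : (Matrix.diagonal (fun _ => μ) - 1 : Matrix (Fin k) (Fin k) ℂ)
      = Matrix.diagonal (fun _ => μ - 1) := by
    rw [← Matrix.diagonal_one, Matrix.diagonal_sub]
  rw [this, Matrix.det_diagonal, Finset.prod_const, Finset.card_fin]

lemma aux_charpoly_negone_eval {k : ℕ} (μ : ℂ) :
    (Matrix.charpoly (-1 : Matrix (Fin k) (Fin k) ℂ)).eval μ = (μ + 1) ^ k := by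
  rw [aux_eval_charpoly, sub_neg_eq_add]
  have : (Matrix.diagonal (fun _ => μ) + 1 : Matrix (Fin k) (Fin k) ℂ)
      = Matrix.diagonal (fun _ => μ + 1) := by
    rw [← Matrix.diagonal_one, Matrix.diagonal_add]
  rw [this, Matrix.det_diagonal, Finset.prod_const, Finset.card_fin]

lemma aux_spec {n m l : ℕ}
    (M : Matrix (Fin n ⊕ (Fin m ⊕ Fin l)) (Fin n ⊕ (Fin m ⊕ Fin l)) ℂ)
    (h : M.charpoly = (1 : Matrix (Fin n) (Fin n) ℂ).charpoly *
      ((1 : Matrix (Fin m) (Fin m) ℂ).charpoly * (-1 : Matrix (Fin l) (Fin l) ℂ).charpoly)) :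
    ∀ μ ∈ spectrum ℂ M, μ = 1 ∨ μ = -1 := by
  intro μ hμ
  have h0 := aux_spec_root M hμ
  rw [h] at h0
  simp only [eval_mul, aux_charpoly_one_eval, aux_charpoly_negone_eval, mul_eq_zero,
    pow_eq_zero_iff', sub_eq_zero, add_eq_zero_iff_eq_neg] at h0
  tauto

lemma aux_spec_L {n m l : ℕ} (W : Matrix (Fin m) (Fin n) ℝ) (V : Matrix (Fin l) (Fin m) ℝ) :
    ∀ μ ∈ spectrum ℂ ((blk3 1 0 0 W 1 0 0 V (-1)).map Complex.ofReal), μ = 1 ∨ μ = -1 := by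
  apply aux_spec
  have hmap : (blk3 1 0 0 W 1 0 0 V (-1)).map Complex.ofReal =
      Matrix.fromBlocks 1 0
        (fromRows (W.map Complex.ofReal) (0 : Matrix (Fin l) (Fin n) ℂ))
        (Matrix.fromBlocks 1 0 (V.map Complex.ofReal) (-1)) := by
    rw [blk3_eq_fromBlocks]
    ext (i | i | i) (j | j | j) <;>
      simp [fromBlocks, fromCols, Matrix.one_apply, apply_ite]
  rw [hmap, Matrix.charpoly_fromBlocks_zero₁₂, Matrix.charpoly_fromBlocks_zero₁₂]

lemma aux_spec_U {n m l : ℕ} (W : Matrix (Fin n) (Fin l) ℝ) (V : Matrix (Fin m) (Fin l) ℝ) :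
    ∀ μ ∈ spectrum ℂ ((blk3 1 0 W 0 1 V 0 0 (-1)).map Complex.ofReal), μ = 1 ∨ μ = -1 := by
  apply aux_spec
  have hmap : (blk3 1 0 W 0 1 V 0 0 (-1)).map Complex.ofReal =
      Matrix.fromBlocks 1
        (fromCols (0 : Matrix (Fin n) (Fin m) ℂ) (W.map Complex.ofReal)) 0
        (Matrix.fromBlocks 1 (V.map Complex.ofReal) 0 (-1)) := by
    rw [blk3_eq_fromBlocks]
    ext (i | i | i) (j | j | j) <;>
      simp [fromBlocks, fromCols, Matrix.one_apply, apply_ite]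
  rw [hmap, Matrix.charpoly_fromBlocks_zero₂₁, Matrix.charpoly_fromBlocks_zero₂₁]

end Aux

theorem stmt6 {n m l : ℕ} (A : Matrix (Fin n) (Fin n) ℝ) (B : Matrix (Fin m) (Fin n) ℝ)
    (C : Matrix (Fin l) (Fin m) ℝ) (hA : A.PosDef) (hB : B.rank = m) (hC : C.rank = l)
    (S : Matrix (Fin m) (Fin m) ℝ) (hS : S = B * A⁻¹ * Bᵀ)
    (X : Matrix (Fin l) (Fin l) ℝ) (hX : X = C * S⁻¹ * Cᵀ)
    (𝒜 Q₃ Q₄ : Matrix (Fin n ⊕ (Fin m ⊕ Fin l)) (Fin n ⊕ (Fin m ⊕ Fin l)) ℝ)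
    (h𝒜 : 𝒜 = blk3 A Bᵀ 0 B 0 Cᵀ 0 C 0)
    (hQ₃ : Q₃ = blk3 A Bᵀ 0 0 (-S) Cᵀ 0 0 (-X))
    (hQ₄ : Q₄ = blk3 A Bᵀ 0 B 0 0 0 C (-X)) :
    𝒜 * Q₃⁻¹ = blk3 1 0 0 (B * A⁻¹) 1 0 0 (-(C * S⁻¹)) (-1) ∧
    Q₄⁻¹ * 𝒜 = blk3 1 0 (A⁻¹ * Bᵀ * S⁻¹ * Cᵀ) 0 1 (-(S⁻¹ * Cᵀ)) 0 0 (-1) ∧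
    (∀ μ ∈ spectrum ℂ ((𝒜 * Q₃⁻¹).map Complex.ofReal), μ = 1 ∨ μ = -1) ∧
    (∀ μ ∈ spectrum ℂ ((Q₄⁻¹ * 𝒜).map Complex.ofReal), μ = 1 ∨ μ = -1) := by
  -- positive definiteness and invertibility
  have hSpd : S.PosDef := by rw [hS]; exact aux_posdef_conj hA.inv B hB
  have hXpd : X.PosDef := by rw [hX]; exact aux_posdef_conj hSpd.inv C hC
  have hA1 : A * A⁻¹ = 1 := Matrix.mul_nonsing_inv A (isUnit_iff_ne_zero.mpr hA.det_pos.ne')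
  have hA1' : A⁻¹ * A = 1 := Matrix.nonsing_inv_mul A (isUnit_iff_ne_zero.mpr hA.det_pos.ne')
  have hS1 : S * S⁻¹ = 1 := Matrix.mul_nonsing_inv S (isUnit_iff_ne_zero.mpr hSpd.det_pos.ne')
  have hS1' : S⁻¹ * S = 1 := Matrix.nonsing_inv_mul S (isUnit_iff_ne_zero.mpr hSpd.det_pos.ne')
  have hX1 : X * X⁻¹ = 1 := Matrix.mul_nonsing_inv X (isUnit_iff_ne_zero.mpr hXpd.det_pos.ne')
  have hX1' : X⁻¹ * X = 1 := Matrix.nonsing_inv_mul X (isUnit_iff_ne_zero.mpr hXpd.det_pos.ne')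
  -- rewriting lemmas
  have eA : ∀ (k : ℕ) (Z : Matrix (Fin n) (Fin k) ℝ), A * (A⁻¹ * Z) = Z := fun k Z => by
    rw [← Matrix.mul_assoc, hA1, Matrix.one_mul]
  have eS : ∀ (k : ℕ) (Z : Matrix (Fin m) (Fin k) ℝ), S * (S⁻¹ * Z) = Z := fun k Z => by
    rw [← Matrix.mul_assoc, hS1, Matrix.one_mul]
  have eX : ∀ (k : ℕ) (Z : Matrix (Fin l) (Fin k) ℝ), X * (X⁻¹ * Z) = Z := fun k Z => by
    rw [← Matrix.mul_assoc, hX1, Matrix.one_mul]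
  have eBS : B * (A⁻¹ * Bᵀ) = S := by rw [hS, Matrix.mul_assoc]
  have eBS' : ∀ (k : ℕ) (Z : Matrix (Fin m) (Fin k) ℝ), B * (A⁻¹ * (Bᵀ * Z)) = S * Z := by
    intro k Z
    simp only [← Matrix.mul_assoc]
    rw [hS]
  have eCX : C * (S⁻¹ * Cᵀ) = X := by rw [hX, Matrix.mul_assoc]
  have eCX' : ∀ (k : ℕ) (Z : Matrix (Fin l) (Fin k) ℝ), C * (S⁻¹ * (Cᵀ * Z)) = X * Z := by
    intro k Z
    simp only [← Matrix.mul_assoc]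
    rw [hX]
  -- explicit inverse of Q₃
  have hQ3R3 : Q₃ * blk3 A⁻¹ (A⁻¹*(Bᵀ*S⁻¹)) (A⁻¹*(Bᵀ*(S⁻¹*(Cᵀ*X⁻¹)))) 0 (-S⁻¹)
      (-(S⁻¹*(Cᵀ*X⁻¹))) 0 0 (-X⁻¹) = 1 := by
    rw [hQ₃, blk3_mul, ← blk3_one]
    apply blk3_congr <;>
      simp [hA1, hS1, hX1, hA1', hS1', hX1', eA, eS, eX, eBS, eBS', eCX, eCX', Matrix.mul_assoc]
  have hQ3inv : Q₃⁻¹ = blk3 A⁻¹ (A⁻¹*(Bᵀ*S⁻¹)) (A⁻¹*(Bᵀ*(S⁻¹*(Cᵀ*X⁻¹)))) 0 (-S⁻¹)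
      (-(S⁻¹*(Cᵀ*X⁻¹))) 0 0 (-X⁻¹) := Matrix.inv_eq_right_inv hQ3R3
  -- explicit inverse of Q₄
  have hR4Q4 : blk3 (A⁻¹ - A⁻¹*(Bᵀ*(S⁻¹*(B*A⁻¹)))) (A⁻¹*(Bᵀ*S⁻¹)) 0 (S⁻¹*(B*A⁻¹)) (-S⁻¹) 0
      (X⁻¹*(C*(S⁻¹*(B*A⁻¹)))) (-(X⁻¹*(C*S⁻¹))) (-X⁻¹) * Q₄ = 1 := by
    rw [hQ₄, blk3_mul, ← blk3_one]
    apply blk3_congr <;>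
      simp [hA1, hS1, hX1, hA1', hS1', hX1', eA, eS, eX, eBS, eBS', eCX, eCX', Matrix.mul_assoc,
        Matrix.sub_mul, sub_self]
  have hQ4inv : Q₄⁻¹ = blk3 (A⁻¹ - A⁻¹*(Bᵀ*(S⁻¹*(B*A⁻¹)))) (A⁻¹*(Bᵀ*S⁻¹)) 0 (S⁻¹*(B*A⁻¹)) (-S⁻¹) 0
      (X⁻¹*(C*(S⁻¹*(B*A⁻¹)))) (-(X⁻¹*(C*S⁻¹))) (-X⁻¹) := Matrix.inv_eq_left_inv hR4Q4
  have part1 : 𝒜 * Q₃⁻¹ = blk3 1 0 0 (B * A⁻¹) 1 0 0 (-(C * S⁻¹)) (-1) := by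
    rw [hQ3inv, h𝒜, blk3_mul]
    apply blk3_congr <;>
      simp [hA1, hS1, hX1, hA1', hS1', hX1', eA, eS, eX, eBS, eBS', eCX, eCX', Matrix.mul_assoc]
  have part2 : Q₄⁻¹ * 𝒜 = blk3 1 0 (A⁻¹ * Bᵀ * S⁻¹ * Cᵀ) 0 1 (-(S⁻¹ * Cᵀ)) 0 0 (-1) := by
    rw [hQ4inv, h𝒜, blk3_mul]
    apply blk3_congr <;>
      simp [hA1, hS1, hX1, hA1', hS1', hX1', eA, eS, eX, eBS, eBS', eCX, eCX', Matrix.mul_assoc,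
        Matrix.sub_mul, sub_self]
  refine ⟨part1, part2, ?_, ?_⟩
  · rw [part1]; exact aux_spec_L _ _
  · rw [part2]; exact aux_spec_U _ _
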